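/- Let f(x) = a_{n_r}x^{n_r} + ... + a_{n_1}x^{n_1} + a_0 ∈ Z[x] with all a_{n_i} ≠ 0, a_0 ≠ 0 and |a_0| = |a_{n_1}| + ... + |a_{n_r}|. If ζ is a root of unity with f(ζ) = 0, then ζ^{n_i} = −sgn(a_0 a_{n_i}) for every i = 1, ..., r; consequently f_c(x) := gcd(x^{n_1} + sgn(a_0 a_{n_1}), ..., x^{n_r} + sgn(a_0 a_{n_r})) divides f(x). -/

import Mathlib

open Polynomial

-- auxiliary: z with re z = -|z| is real
lemma aux_eq_neg_abs {z : ℂ} (h : z.re = -‖z‖) : z = -(‖z‖ : ℝ) := by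
  have him : z.im = 0 := by
    rw [← Complex.abs_re_eq_norm, h, abs_neg, abs_of_nonneg (norm_nonneg z)]
  apply Complex.ext
  · simpa using h
  · simpa using him

lemma aux_int_mul_sign (b : ℤ) : b * b.sign = |b| := by
  rcases lt_trichotomy b 0 with h | h | h
  · simp [Int.sign_eq_neg_one_of_neg h, abs_of_neg h]
  · simp [h]
  · simp [Int.sign_eq_one_of_pos h, abs_of_pos h]

theorem stmt_15 (r : ℕ) (n : Fin (r + 1) → ℕ) (a : Fin (r + 1) → ℤ) (a0 : ℤ)
    (hmono : StrictMono n) (hpos : 0 < n 0) (ha0 : a0 ≠ 0) (ha : ∀ i, a i ≠ 0)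
    (heq : |a0| = ∑ i, |a i|)
    (f : ℤ[X]) (hf : f = C a0 + ∑ i, C (a i) * X ^ (n i))
    (ζ : ℂ) (hζ : ∃ k : ℕ, 0 < k ∧ ζ ^ k = 1) (hroot : aeval ζ f = 0) :
    (∀ i, ζ ^ (n i) = -(((a0 * a i).sign : ℤ) : ℂ)) ∧
      (Finset.univ.gcd fun i => (X : ℚ[X]) ^ (n i) + C (((a0 * a i).sign : ℤ) : ℚ)) ∣
        f.map (Int.castRingHom ℚ) := by
  -- |ζ| = 1
  obtain ⟨k, hk, hζk⟩ := hζ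
  have habsζ : ‖ζ‖ = 1 := Complex.norm_eq_one_of_pow_eq_one hζk hk.ne'
  -- the key equation
  have h1 : (a0 : ℂ) + ∑ i, (a i : ℂ) * ζ ^ (n i) = 0 := by
    rw [hf] at hroot
    simpa using hroot
  set s : ℤ := a0.sign with hs
  have hsa0 : s * a0 = |a0| := by rw [mul_comm]; exact aux_int_mul_sign a0
  have hs1 : s = 1 ∨ s = -1 := by
    rcases lt_trichotomy a0 0 with h | h | h
    · exact Or.inr (Int.sign_eq_neg_one_of_neg h)
    · exact absurd h ha0
    · exact Or.inl (Int.sign_eq_one_of_pos h)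
  have hs2 : s * s = 1 := by rcases hs1 with h | h <;> simp [h]
  -- u i := (s * a i : ℂ) * ζ ^ n i
  have habsu : ∀ i, ‖((s * a i : ℤ) : ℂ) * ζ ^ (n i)‖ = |a i| := by
    intro i
    have h2 : |s * a i| = |a i| := by
      rcases hs1 with h | h <;> simp [h, abs_mul]
    rw [norm_mul, norm_pow, habsζ, one_pow, mul_one, Complex.norm_intCast,
      ← Int.cast_abs, h2, Int.cast_abs]
  have hsum : ∑ i, ((s * a i : ℤ) : ℂ) * ζ ^ (n i) = -(|a0| : ℤ) := by
    have : ∑ i, (a i : ℂ) * ζ ^ (n i) = -(a0 : ℂ) := by linear_combination h1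
    push_cast
    rw [← hsa0]
    push_cast
    calc ∑ i, (s : ℂ) * (a i : ℂ) * ζ ^ (n i)
        = (s : ℂ) * ∑ i, (a i : ℂ) * ζ ^ (n i) := by
          rw [Finset.mul_sum]
          exact Finset.sum_congr rfl fun i _ => by ring
      _ = -((s : ℂ) * a0) := by rw [this]; ring
  -- real parts
  have hre_le : ∀ i ∈ Finset.univ, (-(|a i| : ℝ)) ≤ (((s * a i : ℤ) : ℂ) * ζ ^ (n i)).re := by
    intro i _
    have := Complex.re_le_norm (-(((s * a i : ℤ) : ℂ) * ζ ^ (n i)))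
    rw [norm_neg, habsu i] at this
    simp only [Complex.neg_re] at this
    push_cast at this ⊢
    linarith
  have hre_sum : ∑ i, (((s * a i : ℤ) : ℂ) * ζ ^ (n i)).re = ∑ i, (-(|a i| : ℝ)) := by
    have h3 := congrArg Complex.re hsum
    rw [Complex.re_sum] at h3
    rw [h3]
    simp only [Complex.neg_re, Complex.intCast_re]
    rw [heq]
    push_cast
    rw [← Finset.sum_neg_distrib]
  have hre_eq : ∀ i ∈ Finset.univ, (-(|a i| : ℝ)) = (((s * a i : ℤ) : ℂ) * ζ ^ (n i)).re :=
    (Finset.sum_eq_sum_iff_of_le hre_le).mp hre_sum.symm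
  -- conclude u i = -|a i|
  have hu : ∀ i, ((s * a i : ℤ) : ℂ) * ζ ^ (n i) = -((|a i| : ℤ) : ℂ) := by
    intro i
    have h2 : (((s * a i : ℤ) : ℂ) * ζ ^ (n i)).re
        = -‖((s * a i : ℤ) : ℂ) * ζ ^ (n i)‖ := by
      rw [habsu i, ← hre_eq i (Finset.mem_univ i)]
      push_cast
      ring
    have := aux_eq_neg_abs h2
    rw [habsu i] at this
    rw [this]
    norm_cast
  -- first part
  have part1 : ∀ i, ζ ^ (n i) = -(((a0 * a i).sign : ℤ) : ℂ) := by
    intro i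
    have hne : ((s * a i : ℤ) : ℂ) ≠ 0 := by
      have hsne : s ≠ 0 := by rcases hs1 with h | h <;> simp [h]
      simp only [ne_eq, Int.cast_eq_zero, mul_eq_zero, not_or]
      exact ⟨hsne, ha i⟩
    apply mul_left_cancel₀ hne
    rw [hu i]
    have h4 : (s * a i) * (-(a0 * a i).sign) = -(|a i|) := by
      rw [Int.sign_mul, ← hs]
      calc (s * a i) * (-(s * (a i).sign)) = -((s * s) * (a i * (a i).sign)) := by ring
        _ = -(|a i|) := by rw [hs2, aux_int_mul_sign, one_mul]
    symm
    calc ((s * a i : ℤ) : ℂ) * (-(((a0 * a i).sign : ℤ) : ℂ))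
        = (((s * a i) * (-(a0 * a i).sign) : ℤ) : ℂ) := by push_cast; ring
      _ = -((|a i| : ℤ) : ℂ) := by rw [h4]; push_cast; ring
  refine ⟨part1, ?_⟩
  -- second part: f.map = ∑ C(a i) * (X^{n i} + C (sign (a0 * a i)))
  have hcoef : ∑ i, (a i) * (a0 * a i).sign = a0 := by
    have h1 : ∀ i, (a i) * (a0 * a i).sign = s * |a i| := by
      intro i
      rw [Int.sign_mul, ← hs]
      calc a i * (s * (a i).sign) = s * (a i * (a i).sign) := by ring
        _ = s * |a i| := by rw [aux_int_mul_sign]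
    calc ∑ i, (a i) * (a0 * a i).sign = ∑ i, s * |a i| := Finset.sum_congr rfl fun i _ => h1 i
      _ = s * ∑ i, |a i| := by rw [Finset.mul_sum]
      _ = s * |a0| := by rw [← heq]
      _ = a0 := by rw [← hsa0, ← mul_assoc, hs2, one_mul]
  have key : f.map (Int.castRingHom ℚ)
      = ∑ i, C ((a i : ℚ)) * ((X : ℚ[X]) ^ (n i) + C (((a0 * a i).sign : ℤ) : ℚ)) := by
    rw [hf, Polynomial.map_add, Polynomial.map_sum]
    have hterm : ∀ i : Fin (r + 1), (C (a i) * X ^ (n i)).map (Int.castRingHom ℚ)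
        = C ((a i : ℚ)) * (X : ℚ[X]) ^ (n i) := by
      intro i
      simp
    rw [Finset.sum_congr rfl fun i _ => hterm i]
    have hexp : ∀ i : Fin (r + 1),
        C ((a i : ℚ)) * ((X : ℚ[X]) ^ (n i) + C (((a0 * a i).sign : ℤ) : ℚ))
        = C ((a i : ℚ)) * (X : ℚ[X]) ^ (n i) + C (((a i * (a0 * a i).sign : ℤ)) : ℚ) := by
      intro i
      rw [mul_add, ← C_mul]
      push_cast
      ring_nf
    rw [Finset.sum_congr rfl fun i _ => hexp i, Finset.sum_add_distrib, add_comm]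
    congr 1
    rw [Polynomial.map_C, ← map_sum C]
    congr 1
    simp only [eq_intCast]
    exact_mod_cast hcoef.symm
  rw [key]
  apply Finset.dvd_sum
  intro i _
  exact dvd_mul_of_dvd_right (Finset.gcd_dvd (Finset.mem_univ i)) _
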